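/- arXiv:2508.03930 — 4 statements merged into one kernel-verified Lean document; each statement's English description precedes it below -/
import Mathlib

section
/- A sequence a_1, ..., a_n over an ordered alphabet contains a repeating element if and only if the string a_1^2 b_1 a_2^2 b_2 ⋯ a_n^2 b_n, where b_1 b_2 ⋯ b_n is a square-free string over a disjoint alphabet, contains fewer than n distinct square substrings. -/
open List

variable {α : Type*}

/-- `frag T a b` is the fragment `T[a..b]` (inclusive, 0-based). -/
def frag (T : List α) (a b : ℕ) : List α := (T.drop a).take (b + 1 - a)

/-- `p` is a period of `S`: `0 < p ≤ |S|` and `S[i] = S[i+p]` for all valid `i`. -/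
def IsPeriodOf (p : ℕ) (S : List α) : Prop :=
  0 < p ∧ p ≤ S.length ∧ ∀ i : ℕ, i + p < S.length → S[i]? = S[i + p]?

/-- The smallest period of `S`. -/
noncomputable def minPeriod (S : List α) : ℕ := sInf {p | IsPeriodOf p S}

/-- `T[a..b]` is a run: periodic (its smallest period occurs at least twice)
and maximal on both sides. -/
def IsRun (T : List α) (a b : ℕ) : Prop :=
  a ≤ b ∧ b < T.length ∧
  2 * minPeriod (frag T a b) ≤ b + 1 - a ∧
  (a = 0 ∨ T[a - 1]? ≠ T[a - 1 + minPeriod (frag T a b)]?) ∧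
  (b = T.length - 1 ∨ T[b + 1]? ≠ T[b + 1 - minPeriod (frag T a b)]?)

/-- `W` occurs in `T` at position `s`. -/
def OccursAt (T : List α) (s : ℕ) (W : List α) : Prop :=
  s + W.length ≤ T.length ∧ (T.drop s).take W.length = W

/-- The set of distinct square substrings of `T`. -/
def Squares (T : List α) : Set (List α) :=
  {W | ∃ X : List α, X ≠ [] ∧ W = X ++ X ∧ W <:+: T}

/-- A non-empty string is primitive if it is not a proper power. -/
def Primitive (U : List α) : Prop :=
  U ≠ [] ∧ ∀ (V : List α) (k : ℕ), U = (List.replicate k V).flatten → k = 1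

/-- Cyclic rotation moving the first `c` characters to the end. -/
def rot (c : ℕ) (L : List α) : List α := L.drop c ++ L.take c

/-- `lam` is the Lyndon root of a periodic string `S`: the lexicographically
smallest rotation of `S[0..per(S))`. -/
def LyndonRootOf [LinearOrder α] (S lam : List α) : Prop :=
  (∃ c < minPeriod S, lam = rot c (S.take (minPeriod S))) ∧
  ∀ c < minPeriod S, lam ≤ rot c (S.take (minPeriod S))

/-- Squares generated by a periodic string `U`: squares contained in `U`
whose smallest period equals that of `U`. -/
def FragSquares (U : List α) : Set (List α) :=
  {W | ∃ X : List α, X ≠ [] ∧ W = X ++ X ∧ W <:+: U ∧ minPeriod W = minPeriod U}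

/-- `subper U`: the minimum of `per(X)` over squares `X²` generated by `U`. -/
noncomputable def subper (U : List α) : ℕ :=
  sInf {q | ∃ X : List α, X ≠ [] ∧ (X ++ X) <:+: U ∧
    minPeriod (X ++ X) = minPeriod U ∧ minPeriod X = q}

/-- Fragments `[a..b]` and `[a'..b']` are neighboring:
`[a-1..b+1] ∩ [a'..b'] ≠ ∅`. -/
def Neighboring (a b a' b' : ℕ) : Prop := a ≤ b' + 1 ∧ a' ≤ b + 1

/-- `T[x..y]` is a layer of the pyramid of the neighboring runs
`F = T[a..b]` and `F' = T[a'..b']` (with `a < a'`): a subperiodic run `R`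
with `subper(R) = per(F)` such that `R ∩ (F ∪ F')` is periodic with
period `per(R)`. -/
def IsLayer (T : List α) (a b a' b' x y : ℕ) : Prop :=
  IsRun T x y ∧
  4 * subper (frag T x y) ≤ minPeriod (frag T x y) ∧
  subper (frag T x y) = minPeriod (frag T a b) ∧
  2 * minPeriod (frag T x y) ≤ min y b' + 1 - max x a ∧
  IsPeriodOf (minPeriod (frag T x y)) (frag T (max x a) (min y b'))

/-- A `τ`-synchronizing set of `T` (Kempa–Kociumaka): consistency and density. -/
def SyncSet (T : List α) (τ : ℕ) (S : Set ℕ) : Prop :=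
  (∀ i ∈ S, i + 2 * τ ≤ T.length) ∧
  (∀ i j : ℕ, i + 2 * τ ≤ T.length → j + 2 * τ ≤ T.length →
    (T.drop i).take (2 * τ) = (T.drop j).take (2 * τ) → (i ∈ S ↔ j ∈ S)) ∧
  (∀ i : ℕ, i + 3 * τ - 1 ≤ T.length →
    ((∀ k ∈ S, k < i ∨ i + τ ≤ k) ↔
      3 * minPeriod ((T.drop i).take (3 * τ - 1)) ≤ τ))

lemma join_map_blk_get? {α β : Type*} (l : List (α × β)) (k : ℕ) :
    ((l.map fun p => ([Sum.inl p.1, Sum.inl p.1, Sum.inr p.2] : List (α ⊕ β))).flatten)[k]?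
      = (l[k / 3]?).map (fun p => if k % 3 = 2 then Sum.inr p.2 else Sum.inl p.1) := by
  induction l generalizing k with
  | nil => simp
  | cons p t ih =>
    rw [List.map_cons]
    rw [List.flatten_cons]
    match k with
    | 0 => rfl
    | 1 => rfl
    | 2 => rfl
    | (j+3) =>
      rw [List.getElem?_append_right (by simp : ([Sum.inl p.1, Sum.inl p.1, Sum.inr p.2] : List (α ⊕ β)).length ≤ j + 3)]
      simp only [List.length_cons, List.length_nil]
      have := ih j
      rw [show j + 3 - 3 = j by omega, this,
        show (j+3)/3 = j/3 + 1 by omega, show (j+3)%3 = j%3 by omega]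
      rfl

lemma T_get? {α β : Type*} {n : ℕ} (a : Fin n → α) (b : Fin n → β) (k : ℕ) :
    ((List.ofFn fun i => ([Sum.inl (a i), Sum.inl (a i), Sum.inr (b i)] : List (α ⊕ β))).flatten)[k]?
      = if h : k < 3 * n then
          some (if k % 3 = 2 then Sum.inr (b ⟨k / 3, by omega⟩) else Sum.inl (a ⟨k / 3, by omega⟩))
        else none := by
  have hmap : (List.ofFn fun i => ([Sum.inl (a i), Sum.inl (a i), Sum.inr (b i)] : List (α ⊕ β)))
      = (List.ofFn fun i => (a i, b i)).map (fun p => [Sum.inl p.1, Sum.inl p.1, Sum.inr p.2]) := by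
    rw [List.map_ofFn]; rfl
  rw [hmap, join_map_blk_get?, List.getElem?_ofFn]
  by_cases h : k < 3 * n
  · rw [dif_pos h]
    have hd : k / 3 < n := by omega
    simp only [dif_pos hd, Option.map_some]
  · rw [dif_neg h]
    have hd : ¬ k / 3 < n := by omega
    simp only [dif_neg hd, Option.map_none]

lemma T_length {α β : Type*} {n : ℕ} (a : Fin n → α) (b : Fin n → β) :
    ((List.ofFn fun i => ([Sum.inl (a i), Sum.inl (a i), Sum.inr (b i)] : List (α ⊕ β))).flatten).length
      = 3 * n := by
  set T := ((List.ofFn fun i => ([Sum.inl (a i), Sum.inl (a i), Sum.inr (b i)] : List (α ⊕ β))).flatten)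
  have h1 : T[3 * n]? = none := by rw [T_get?]; simp
  have h2 : T.length ≤ 3 * n := List.getElem?_eq_none_iff.mp h1
  rcases Nat.eq_zero_or_pos n with h | h
  · subst h; omega
  · have h3 : T[3 * n - 1]? ≠ none := by
      rw [T_get?, dif_pos (by omega)]; simp
    have h4 : ¬ T.length ≤ 3 * n - 1 := fun hc => h3 (List.getElem?_eq_none_iff.mpr hc)
    omega

def Squares' {γ : Type*} (T : List γ) : Set (List γ) :=
  {W | ∃ X : List γ, X ≠ [] ∧ W = X ++ X ∧ W <:+: T}

lemma squares_char {α β : Type*} (n : ℕ) (a : Fin n → α) (b : Fin n → β)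
    (hb : ∀ X : List β, X ≠ [] → ¬ (X ++ X) <:+: List.ofFn b) :
    Squares' ((List.ofFn fun i => ([Sum.inl (a i), Sum.inl (a i), Sum.inr (b i)] : List (α ⊕ β))).flatten)
      = (fun x : α => ([Sum.inl x, Sum.inl x] : List (α ⊕ β))) '' Set.range a := by
  set T := ((List.ofFn fun i => ([Sum.inl (a i), Sum.inl (a i), Sum.inr (b i)] : List (α ⊕ β))).flatten) with hT
  have hTlen : T.length = 3 * n := T_length a b
  have hTget : ∀ k : ℕ, T[k]? = if h : k < 3 * n then
      some (if k % 3 = 2 then Sum.inr (b ⟨k / 3, by omega⟩) else Sum.inl (a ⟨k / 3, by omega⟩))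
      else none := T_get? a b
  have hmod2 : ∀ k1 k2 : ℕ, k1 < 3 * n → k2 < 3 * n → T[k1]? = T[k2]? →
      (k1 % 3 = 2 ↔ k2 % 3 = 2) := by
    intro k1 k2 h1 h2 h
    rw [hTget k1, hTget k2, dif_pos h1, dif_pos h2] at h
    split_ifs at h with e1 e2 e2 <;> simp_all
  ext W
  constructor
  · rintro ⟨X, hX, rfl, s, t, hst⟩
    set s0 := s.length with hs0
    set m := X.length with hm
    have hm0 : 0 < m := List.length_pos_iff.mpr hX
    have hWlen : (X ++ X).length = 2 * m := by simp [hm]; omega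
    have hs2 : s0 + 2 * m ≤ 3 * n := by
      have := congrArg List.length hst
      simp [hTlen] at this
      omega
    have hWget : ∀ p, p < 2 * m → T[s0 + p]? = (X ++ X)[p]? := by
      intro p hp
      rw [← hst, List.append_assoc, List.getElem?_append_right (by omega : s.length ≤ s0 + p),
        show s0 + p - s.length = p by omega,
        List.getElem?_append_left (by omega : p < (X ++ X).length)]
    have hper : ∀ p, p < m → T[s0 + p]? = T[s0 + m + p]? := by
      intro p hp
      rw [show s0 + m + p = s0 + (m + p) by omega]
      rw [hWget p (by omega), hWget (m + p) (by omega),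
        List.getElem?_append_left (by omega : p < X.length),
        List.getElem?_append_right (by omega : X.length ≤ m + p),
        show m + p - X.length = p by omega]
    by_cases hcase : ∀ p, p < 2 * m → (s0 + p) % 3 ≠ 2
    · -- no separator inside: m = 1, s0 % 3 = 0
      have hm1 : m = 1 := by
        by_contra hm1
        have h0 := hcase 0 (by omega)
        have h1 := hcase 1 (by omega)
        have h2 := hcase 2 (by omega)
        omega
      have hs03 : s0 % 3 = 0 := by
        have h0 := hcase 0 (by omega)
        have h1 := hcase 1 (by omega)
        omega
      obtain ⟨x, rfl⟩ : ∃ x, X = [x] := by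
        rcases X with _ | ⟨x, _ | ⟨y, t⟩⟩ <;> simp_all
      have := hWget 0 (by omega)
      rw [hTget] at this
      rw [dif_pos (by omega)] at this
      rw [if_neg (by omega)] at this
      simp at this
      exact ⟨a ⟨s0 / 3, by omega⟩, Set.mem_range_self _, by rw [← this]; rfl⟩
    · push_neg at hcase
      obtain ⟨p0, hp0, hp0m⟩ := hcase
      -- get a witness < m
      obtain ⟨p1, hp1, hp1m⟩ : ∃ p1, p1 < m ∧ (s0 + p1) % 3 = 2 := by
        rcases lt_or_ge p0 m with h | h
        · exact ⟨p0, h, hp0m⟩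
        · refine ⟨p0 - m, by omega, ?_⟩
          have := hper (p0 - m) (by omega)
          rw [show s0 + m + (p0 - m) = s0 + p0 by omega] at this
          have := hmod2 _ _ (by omega) (by omega) this
          omega
      have hm3 : m % 3 = 0 := by
        have h := hper p1 hp1
        have := hmod2 _ _ (by omega) (by omega) h
        omega
      set q := m / 3 with hq
      have hq0 : 0 < q := by omega
      set i := s0 / 3 with hi
      have hifacts : 3 * i ≤ s0 ∧ s0 < 3 * i + 3 := by omega
      have hiq : i + 2 * q ≤ n := by omega
      -- period on b
      have hbper : ∀ j, j < q → (List.ofFn b)[i + j]? = (List.ofFn b)[i + j + q]? := by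
        intro j hj
        have hp : 3 * (i + j) + 2 - s0 < m := by omega
        have h := hper (3 * (i + j) + 2 - s0) hp
        rw [show s0 + (3 * (i + j) + 2 - s0) = 3 * (i + j) + 2 by omega,
          show s0 + m + (3 * (i + j) + 2 - s0) = 3 * (i + j + q) + 2 by omega] at h
        rw [hTget, hTget, dif_pos (by omega), dif_pos (by omega),
          if_pos (by omega), if_pos (by omega)] at h
        simp only [Option.some.injEq, Sum.inr.injEq] at h
        simp only [show (3 * (i + j) + 2) / 3 = i + j from by omega,
          show (3 * (i + j + q) + 2) / 3 = i + j + q from by omega] at h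
        rw [List.getElem?_ofFn, List.getElem?_ofFn]
        simp only [dif_pos (by omega : i + j < n),
          dif_pos (by omega : i + j + q < n)]
        exact congrArg some h
      exfalso
      set X' := ((List.ofFn b).drop i).take q with hX'
      have hblen : (List.ofFn b).length = n := by simp
      have hX'len : X'.length = q := by
        simp only [hX', List.length_take, List.length_drop, hblen]; omega
      have hX'ne : X' ≠ [] := by
        intro hc; rw [hc] at hX'len; simp at hX'len; omega
      have hsqeq : X' ++ X' = ((List.ofFn b).drop i).take (2 * q) := by
        apply List.ext_getElem?
        intro k
        by_cases hk : k < q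
        · rw [List.getElem?_append_left (by omega : k < X'.length)]
          rw [hX', List.getElem?_take_of_lt hk, List.getElem?_take_of_lt (by omega : k < 2 * q)]
        · by_cases hk2 : k < 2 * q
          · rw [List.getElem?_append_right (by omega : X'.length ≤ k), hX'len]
            rw [hX', List.getElem?_take_of_lt (by omega : k - q < q), List.getElem?_take_of_lt hk2,
              List.getElem?_drop, List.getElem?_drop]
            have hh := hbper (k - q) (by omega)
            rw [show i + (k - q) + q = i + k by omega] at hh
            exact hh
          · rw [List.getElem?_eq_none_iff.mpr (by simp [hX'len]; omega),
              List.getElem?_eq_none_iff.mpr (by simp [List.length_take, List.length_drop, hblen]; omega)]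
      apply hb X' hX'ne
      rw [hsqeq]
      exact ((List.take_prefix _ _).isInfix).trans ((List.drop_suffix _ _).isInfix)
  · rintro ⟨x, ⟨i, rfl⟩, rfl⟩
    refine ⟨[Sum.inl (a i)], by simp, rfl, ?_⟩
    have hin : (i : ℕ) < n := i.isLt
    have heq : ([Sum.inl (a i), Sum.inl (a i)] : List (α ⊕ β)) = (T.drop (3 * (i : ℕ))).take 2 := by
      apply List.ext_getElem?
      intro k
      match k with
      | 0 =>
        rw [List.getElem?_take_of_lt (by omega : 0 < 2), List.getElem?_drop, hTget]
        rw [dif_pos (by omega : 3 * (i : ℕ) + 0 < 3 * n), if_neg (by omega)]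
        simp only [show (3 * (i : ℕ) + 0) / 3 = (i : ℕ) from by omega, Fin.eta]
        rfl
      | 1 =>
        rw [List.getElem?_take_of_lt (by omega : 1 < 2), List.getElem?_drop, hTget]
        rw [dif_pos (by omega : 3 * (i : ℕ) + 1 < 3 * n), if_neg (by omega)]
        simp only [show (3 * (i : ℕ) + 1) / 3 = (i : ℕ) from by omega, Fin.eta]
        rfl
      | (k+2) =>
        rw [List.getElem?_eq_none_iff.mpr (by simp), List.getElem?_eq_none_iff.mpr
          (by simp only [List.length_take, List.length_drop, hTlen]; omega)]
    show ([Sum.inl (a i), Sum.inl (a i)] : List (α ⊕ β)) <:+: T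
    rw [heq]
    exact ((List.take_prefix _ _).isInfix).trans ((List.drop_suffix _ _).isInfix)

/-- A sequence `a` has a repeated element iff the string
`a₁²b₁a₂²b₂⋯aₙ²bₙ`, for a square-free `b₁⋯bₙ` over a disjoint alphabet,
has fewer than `n` distinct square substrings. -/
theorem repeat_iff_few_squares {α β : Type*} (n : ℕ) (a : Fin n → α) (b : Fin n → β)
    (hb : ∀ X : List β, X ≠ [] → ¬ (X ++ X) <:+: List.ofFn b) :
    (∃ i j : Fin n, i ≠ j ∧ a i = a j) ↔
      (Squares ((List.ofFn fun i =>
        ([Sum.inl (a i), Sum.inl (a i), Sum.inr (b i)] : List (α ⊕ β))).flatten)).ncard < n := by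
  classical
  have hsq : Squares ((List.ofFn fun i =>
      ([Sum.inl (a i), Sum.inl (a i), Sum.inr (b i)] : List (α ⊕ β))).flatten)
      = Squares' ((List.ofFn fun i =>
      ([Sum.inl (a i), Sum.inl (a i), Sum.inr (b i)] : List (α ⊕ β))).flatten) := rfl
  rw [hsq, squares_char n a b hb]
  have hinj : Function.Injective (fun x : α => ([Sum.inl x, Sum.inl x] : List (α ⊕ β))) := by
    intro x y h; simpa using h
  rw [Set.ncard_image_of_injective _ hinj]
  have hr : Set.range a = ↑(Finset.univ.image a) := by simp
  rw [hr, Set.ncard_coe_finset]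
  have huniv : (Finset.univ : Finset (Fin n)).card = n := by simp
  have hle : (Finset.univ.image a).card ≤ n := by
    calc (Finset.univ.image a).card ≤ (Finset.univ : Finset (Fin n)).card :=
          Finset.card_image_le
    _ = n := huniv
  have hiff : (Finset.univ.image a).card = n ↔ Function.Injective a := by
    constructor
    · intro h
      have := Finset.card_image_iff.mp (by rw [h, huniv])
      rw [Finset.coe_univ] at this; exact fun x y hxy => this (Set.mem_univ x) (Set.mem_univ y) hxy
    · intro h
      rw [Finset.card_image_of_injective _ h, huniv]
  constructor
  · rintro ⟨i, j, hij, he⟩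
    have hni : ¬ Function.Injective a := fun h => hij (h he)
    have : (Finset.univ.image a).card ≠ n := fun h => hni (hiff.mp h)
    omega
  · intro h
    have : (Finset.univ.image a).card ≠ n := by omega
    have hni : ¬ Function.Injective a := fun hi => this (hiff.mpr hi)
    obtain ⟨x, y, hxy, hne⟩ := Function.not_injective_iff.mp hni
    exact ⟨x, y, hne, hxy⟩
end

section
/- Every square substring X^2 of a string T is generated by some run of T; that is, there exists a run R of T containing an occurrence of X^2 such that per(X^2) = per(R). -/
open List

variable {α : Type*}

/-- helper: membership for minPeriod -/
lemma minPeriod_isPeriodOf {S : List α} (h : ∃ r, IsPeriodOf r S) :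
    IsPeriodOf (minPeriod S) S := Nat.sInf_mem h

lemma minPeriod_le {S : List α} {r : ℕ} (h : IsPeriodOf r S) : minPeriod S ≤ r :=
  Nat.sInf_le h

/-- Every square substring of `T` is generated by some run of `T`. -/
theorem square_generated_by_run (T X : List α) (hX : X ≠ [])
    (hocc : (X ++ X) <:+: T) :
    ∃ a b : ℕ, IsRun T a b ∧ (X ++ X) <:+: frag T a b ∧
      minPeriod (X ++ X) = minPeriod (frag T a b) := by
  classical
  obtain ⟨pre, post, hT⟩ := hocc
  set n := X.length with hn_def
  have hn : 0 < n := List.length_pos_iff.mpr hX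
  set s := pre.length with hs_def
  have hxx : (X ++ X).length = 2 * n := by simp only [List.length_append]; omega
  have hlen : s + 2 * n ≤ T.length := by
    rw [← hT]; simp only [List.length_append]; omega
  have hTdrop : T = pre ++ ((X ++ X) ++ post) := by rw [← hT, List.append_assoc]
  have hTocc : ∀ i, i < 2 * n → T[s + i]? = (X ++ X)[i]? := by
    intro i hi
    rw [hTdrop, List.getElem?_append_right (by omega : pre.length ≤ s + i),
      (by omega : s + i - pre.length = i),
      List.getElem?_append_left (by omega : i < (X ++ X).length)]
  have hnper : IsPeriodOf n (X ++ X) := by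
    refine ⟨hn, by omega, ?_⟩
    intro i hi
    rw [hxx] at hi
    rw [List.getElem?_append_left (by omega : i < X.length),
      List.getElem?_append_right (by omega : X.length ≤ i + n),
      (by omega : i + n - X.length = i)]
  set p := minPeriod (X ++ X) with hp_def
  have hpmem : IsPeriodOf p (X ++ X) := minPeriod_isPeriodOf ⟨n, hnper⟩
  have hpn : p ≤ n := minPeriod_le hnper
  have hp0 : 0 < p := hpmem.1
  have hper : ∀ i, s ≤ i → i + p < s + 2 * n → T[i]? = T[i + p]? := by
    intro i hsi hip
    obtain ⟨j, rfl⟩ := Nat.exists_eq_add_of_le hsi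
    rw [hTocc j (by omega), (by omega : s + j + p = s + (j + p)),
      hTocc (j + p) (by omega)]
    exact hpmem.2.2 j (by omega)
  -- left extension
  have hQLex : ∃ k, s - k = 0 ∨ T[s - k - 1]? ≠ T[s - k - 1 + p]? :=
    ⟨s, Or.inl (by omega)⟩
  have hklspec := Nat.find_spec hQLex
  have hkls : Nat.find hQLex ≤ s := Nat.find_le (Or.inl (by omega))
  set kl := Nat.find hQLex with hkl_def
  set a := s - kl with ha_def
  have hperL : ∀ k, k ≤ kl → ∀ i, s - k ≤ i → i + p < s + 2 * n →
      T[i]? = T[i + p]? := by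
    intro k
    induction k with
    | zero => intro _ i hi hip; exact hper i (by omega) hip
    | succ k ih =>
      intro hk i hi hip
      have hnot := Nat.find_min hQLex (show k < Nat.find hQLex by omega)
      push_neg at hnot
      by_cases hcase : s - k ≤ i
      · exact ih (by omega) i hcase hip
      · rw [(by omega : i = s - k - 1)]
        exact hnot.2
  -- right extension
  have hQRex : ∃ k, s + 2 * n - 1 + k = T.length - 1 ∨
      T[s + 2 * n + k]? ≠ T[s + 2 * n + k - p]? :=
    ⟨T.length - 1 - (s + 2 * n - 1), Or.inl (by omega)⟩
  have hkrspec := Nat.find_spec hQRex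
  have hkrle : Nat.find hQRex ≤ T.length - 1 - (s + 2 * n - 1) :=
    Nat.find_le (Or.inl (by omega))
  set kr := Nat.find hQRex with hkr_def
  set b := s + 2 * n - 1 + kr with hb_def
  have hbT : b < T.length := by omega
  have hperR : ∀ k, k ≤ kr → ∀ i, s ≤ i → i + p < s + 2 * n + k →
      T[i]? = T[i + p]? := by
    intro k
    induction k with
    | zero => intro _ i hsi hip; exact hper i hsi (by omega)
    | succ k ih =>
      intro hk i hsi hip
      by_cases hcase : i + p < s + 2 * n + k
      · exact ih (by omega) i hsi hcase
      · have h1 : i + p = s + 2 * n + k := by omega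
        have hnot := Nat.find_min hQRex (show k < Nat.find hQRex by omega)
        push_neg at hnot
        rw [(by omega : i = s + 2 * n + k - p),
          (by omega : s + 2 * n + k - p + p = s + 2 * n + k)]
        exact hnot.2.symm
  have hperAB : ∀ i, a ≤ i → i + p ≤ b → T[i]? = T[i + p]? := by
    intro i hai hib
    by_cases hsi : s ≤ i
    · exact hperR kr le_rfl i hsi (by omega)
    · exact hperL kl le_rfl i (by omega) (by omega)
  have hFlen : (frag T a b).length = b + 1 - a := by
    simp only [frag, List.length_take, List.length_drop]
    omega
  have hFget : ∀ i, i < b + 1 - a → (frag T a b)[i]? = T[a + i]? := by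
    intro i hi
    simp only [frag]
    rw [List.getElem?_take_of_lt hi, List.getElem?_drop]
  have hpF : IsPeriodOf p (frag T a b) := by
    refine ⟨hp0, by omega, ?_⟩
    intro i hip
    rw [hFlen] at hip
    rw [hFget i (by omega), hFget (i + p) (by omega),
      (by omega : a + (i + p) = a + i + p)]
    exact hperAB (a + i) (by omega) (by omega)
  have hqle : minPeriod (frag T a b) ≤ p := minPeriod_le hpF
  have hqmem : IsPeriodOf (minPeriod (frag T a b)) (frag T a b) :=
    minPeriod_isPeriodOf ⟨p, hpF⟩
  have hq0 : 0 < minPeriod (frag T a b) := hqmem.1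
  have hqXX : IsPeriodOf (minPeriod (frag T a b)) (X ++ X) := by
    refine ⟨hq0, by omega, ?_⟩
    intro i hiq
    rw [hxx] at hiq
    have e1 : (X ++ X)[i]? = (frag T a b)[s - a + i]? := by
      rw [hFget _ (by omega), (by omega : a + (s - a + i) = s + i), hTocc i (by omega)]
    have e2 : (X ++ X)[i + minPeriod (frag T a b)]? =
        (frag T a b)[s - a + i + minPeriod (frag T a b)]? := by
      rw [hFget _ (by omega),
        (by omega : a + (s - a + i + minPeriod (frag T a b)) =
          s + (i + minPeriod (frag T a b))),
        hTocc (i + minPeriod (frag T a b)) (by omega)]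
    rw [e1, e2]
    exact hqmem.2.2 (s - a + i) (by omega)
  have hqp : minPeriod (frag T a b) = p := le_antisymm hqle (minPeriod_le hqXX)
  have key : ((frag T a b).drop (s - a)).take (2 * n) = X ++ X := by
    apply List.ext_getElem?
    intro i
    by_cases hi : i < 2 * n
    · rw [List.getElem?_take_of_lt hi, List.getElem?_drop, hFget _ (by omega),
        (by omega : a + (s - a + i) = s + i), hTocc i (by omega)]
    · rw [List.getElem?_eq_none_iff.mpr (le_trans (List.length_take_le _ _) (by omega)),
        List.getElem?_eq_none_iff.mpr (by omega)]
  have hinf : (X ++ X) <:+: frag T a b := by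
    rw [← key]
    exact ((List.take_prefix _ _).isInfix).trans ((List.drop_suffix _ _).isInfix)
  refine ⟨a, b, ⟨by omega, hbT, ?_, ?_, ?_⟩, hinf, hqp.symm⟩
  · rw [hqp]; omega
  · rw [hqp]
    exact hklspec
  · rw [hqp]
    rcases hkrspec with h | h
    · left; omega
    · right
      rw [(by omega : b + 1 = s + 2 * n + kr), (by omega : s + 2 * n + kr - p = s + 2 * n + kr - p)]
      exact h
end

section
/- If a square X^2 is generated by a periodic string U (i.e., X^2 occurs in U and per(X^2) = per(U)), then |X| is a multiple of per(U). -/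
open List

variable {α : Type*}

lemma period_sub {p q : ℕ} {S : List α} (hp : IsPeriodOf p S) (hq : IsPeriodOf q S)
    (hpq : p < q) (hn : p + q ≤ S.length) : IsPeriodOf (q - p) S := by
  obtain ⟨hp0, hpl, hpi⟩ := hp
  obtain ⟨hq0, hql, hqi⟩ := hq
  refine ⟨by omega, by omega, ?_⟩
  intro i hi
  by_cases h : i + q < S.length
  · have h1 := hqi i h
    have h2 := hpi (i + (q - p)) (by omega)
    have e : i + (q - p) + p = i + q := by omega
    rw [e] at h2
    exact h1.trans h2.symm
  · have h1 := hpi (i - p) (by omega)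
    have h2 := hqi (i - p) (by omega)
    have e1 : i - p + p = i := by omega
    have e2 : i - p + q = i + (q - p) := by omega
    rw [e1] at h1
    rw [e2] at h2
    exact h1.symm.trans h2

lemma fine_wilf : ∀ n p q (S : List α), p + q = n → IsPeriodOf p S → IsPeriodOf q S →
    p + q ≤ S.length → IsPeriodOf (Nat.gcd p q) S := by
  intro n
  induction n using Nat.strong_induction_on with
  | _ n ih =>
    intro p q S hn hp hq hle
    rcases lt_trichotomy p q with h | h | h
    · have hsub := period_sub hp hq h hle
      have hql := hq.2.1
      have := ih q (by have := hp.1; omega) p (q - p) S (by omega) hp hsub (by omega)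
      rwa [Nat.gcd_sub_self_right h.le] at this
    · rw [h, Nat.gcd_self]; exact hq
    · have hsub := period_sub hq hp h (by omega)
      have hpl := hp.2.1
      have := ih p (by have := hq.1; omega) q (p - q) S (by omega) hq hsub (by omega)
      rw [Nat.gcd_comm, ← Nat.gcd_sub_self_right h.le]
      exact this

/-- If a square `X²` is generated by a periodic string `U`, then `|X|` is a
multiple of `per(U)`. -/
theorem root_length_multiple_of_period (U X : List α) (hX : X ≠ [])
    (hUper : 2 * minPeriod U ≤ U.length)
    (hocc : (X ++ X) <:+: U)
    (heq : minPeriod (X ++ X) = minPeriod U) :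
    minPeriod U ∣ X.length := by
  set S := X ++ X with hS
  have hm0 : 0 < X.length := List.length_pos_iff.2 hX
  have hlen : S.length = 2 * X.length := by simp [hS, two_mul]
  have hmper : IsPeriodOf X.length S := by
    refine ⟨hm0, by omega, ?_⟩
    intro i hi
    have hi' : i < X.length := by omega
    rw [hS, List.getElem?_append_left hi', List.getElem?_append_right (by omega)]
    congr 1
    omega
  have hne : {p | IsPeriodOf p S}.Nonempty := ⟨X.length, hmper⟩
  have hpmem : IsPeriodOf (minPeriod S) S := Nat.sInf_mem hne
  have hple : minPeriod S ≤ X.length := Nat.sInf_le hmper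
  have hgcd : IsPeriodOf (Nat.gcd (minPeriod S) X.length) S :=
    fine_wilf _ _ _ _ rfl hpmem hmper (by omega)
  have hle2 : minPeriod S ≤ Nat.gcd (minPeriod S) X.length := Nat.sInf_le hgcd
  have hle3 : Nat.gcd (minPeriod S) X.length ≤ minPeriod S :=
    Nat.gcd_le_left _ hpmem.1
  have heqg : Nat.gcd (minPeriod S) X.length = minPeriod S := le_antisymm hle3 hle2
  have hdvd : minPeriod S ∣ X.length := heqg ▸ Nat.gcd_dvd_right _ _
  rwa [← heq]
end

section
/- If F and F' are two distinct neighboring runs in a string T with the same period p, then their overlap satisfies |F ∩ F'| ≤ p - 1. -/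
open List

variable {α : Type*}

lemma frag_length (T : List α) (a b : ℕ) (hb : b < T.length) :
    (frag T a b).length = b + 1 - a := by
  simp [frag]; omega

lemma frag_get? (T : List α) (a b j : ℕ) (hj : j < b + 1 - a) :
    (frag T a b)[j]? = T[a + j]? := by
  unfold frag
  rw [List.getElem?_take_of_lt hj, List.getElem?_drop]

lemma frag_ne_nil {T : List α} {a b : ℕ} (hab : a ≤ b) (hb : b < T.length) :
    frag T a b ≠ [] := by
  have h := frag_length T a b hb
  intro hn; rw [hn] at h; simp at h; omega

lemma minPeriod_isPeriod {S : List α} (hS : S ≠ []) : IsPeriodOf (minPeriod S) S := by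
  have h : IsPeriodOf S.length S :=
    ⟨List.length_pos_iff.mpr hS, le_refl _, fun i hi => absurd hi (by omega)⟩
  exact Nat.sInf_mem (⟨S.length, h⟩ : {p | IsPeriodOf p S}.Nonempty)

lemma period_T {T : List α} {a b p : ℕ} (hb : b < T.length)
    (hp : IsPeriodOf p (frag T a b)) {i : ℕ} (hai : a ≤ i) (hib : i + p ≤ b) :
    T[i]? = T[i + p]? := by
  have hlen := frag_length T a b hb
  have h := hp.2.2 (i - a) (by omega)
  rw [frag_get? T a b _ (by omega), frag_get? T a b _ (by omega)] at h
  have e1 : a + (i - a) = i := by omega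
  have e2 : a + (i - a + p) = i + p := by omega
  rw [e1, e2] at h
  exact h

lemma overlap_aux (T : List α) (a b a' b' p : ℕ)
    (h1 : IsRun T a b) (h2 : IsRun T a' b')
    (hp1 : minPeriod (frag T a b) = p) (hp2 : minPeriod (frag T a' b') = p)
    (hne : (a, b) ≠ (a', b')) (haa : a ≤ a') :
    min b b' + 1 - max a a' ≤ p - 1 := by
  obtain ⟨hab, hbT, h2p, hL, hR⟩ := h1
  obtain ⟨hab', hbT', h2p', hL', hR'⟩ := h2
  rw [hp1] at h2p hL hR
  rw [hp2] at h2p' hL' hR'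
  have hP : IsPeriodOf p (frag T a b) := hp1 ▸ minPeriod_isPeriod (frag_ne_nil hab hbT)
  have hP' : IsPeriodOf p (frag T a' b') := hp2 ▸ minPeriod_isPeriod (frag_ne_nil hab' hbT')
  have hp0 : 0 < p := hP.1
  by_contra hcon
  push_neg at hcon
  rcases le_or_gt b' b with hbb | hbb
  · rcases eq_or_lt_of_le haa with heq | hlt
    · have hbne : b ≠ b' := fun h => hne (by simp [heq, h])
      rcases hR' with h | h
      · omega
      · apply h
        have := period_T hbT hP (i := b' + 1 - p) (by omega) (by omega)
        rw [show b' + 1 - p + p = b' + 1 from by omega] at this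
        exact this.symm
    · rcases hL' with h | h
      · omega
      · exact h (period_T hbT hP (i := a' - 1) (by omega) (by omega))
  · rcases hR with h | h
    · omega
    · apply h
      have := period_T hbT' hP' (i := b + 1 - p) (by omega) (by omega)
      rw [show b + 1 - p + p = b + 1 from by omega] at this
      exact this.symm

/-- Two distinct neighboring runs with the same period `p` overlap on at most
`p - 1` positions. -/
theorem overlap_of_neighboring_runs (T : List α) (a b a' b' p : ℕ)
    (h1 : IsRun T a b) (h2 : IsRun T a' b')
    (hp1 : minPeriod (frag T a b) = p) (hp2 : minPeriod (frag T a' b') = p)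
    (hne : (a, b) ≠ (a', b'))
    (hnb : Neighboring a b a' b') :
    min b b' + 1 - max a a' ≤ p - 1 := by
  rcases le_total a a' with h | h
  · exact overlap_aux T a b a' b' p h1 h2 hp1 hp2 hne h
  · have := overlap_aux T a' b' a b p h2 h1 hp2 hp1 hne.symm h
    rwa [min_comm, max_comm] at this
end
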